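/- Let X be a topological space and p ∈ X. Let j : Ω_pX → ΛX be the inclusion of the based loop space into the free loop space, e : ΛX → X the evaluation map e(γ) = γ(0), and c : X → ΛX the constant-loop map c(q) = c_q; all three maps are continuous. Then the induced homomorphisms on fundamental groups based at the constant loop c_p form a split short exact sequence: e_* ∘ c_* is the identity of π₁(X, p); j_* : π₁(Ω_pX, c_p) → π₁(ΛX, c_p) is injective; e_* : π₁(ΛX, c_p) → π₁(X, p) is surjective; and the kernel of e_* equals the image of j_*. -/

import Mathlib

open CategoryTheory

universe u

/-- The homomorphism `π₁(X, x) →* π₁(Y, f x)` induced by a continuous map `f : X → Y`. -/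
noncomputable def inducedFundamentalGroupHom {X Y : Type u} [TopologicalSpace X]
    [TopologicalSpace Y] (f : C(X, Y)) (x : X) :
    FundamentalGroup X x →* FundamentalGroup Y (f x) :=
  Functor.mapEnd (X := FundamentalGroupoid.mk x)
    (FundamentalGroupoid.fundamentalGroupoidFunctor.map (X := TopCat.of X) (Y := TopCat.of Y) (TopCat.ofHom f))

/-- The circle `S¹ = ℝ ⧸ ℤ`, the domain of free loops. -/
abbrev FreeLoopCircle : Type := AddCircle (1 : ℝ)

/-- The free loop space `ΛX = C(S¹, X)`, with the compact-open topology. -/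
abbrev FreeLoopSpace (X : Type) [TopologicalSpace X] : Type := C(FreeLoopCircle, X)

/-- The constant loop `c_p` at a point `p`. -/
noncomputable abbrev constLoop {X : Type} [TopologicalSpace X] (p : X) : FreeLoopSpace X :=
  ContinuousMap.const FreeLoopCircle p

/-- The based loop space `Ω_pX = {γ ∈ ΛX : γ(0) = p}`, with the subspace topology. -/
abbrev BasedLoopSpace (X : Type) [TopologicalSpace X] (p : X) : Type :=
  {γ : FreeLoopSpace X // γ 0 = p}

/-- The constant loop `c_p`, as the basepoint of `Ω_pX`. -/
noncomputable abbrev basedConstLoop {X : Type} [TopologicalSpace X] (p : X) : BasedLoopSpace X p :=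
  ⟨constLoop p, rfl⟩

/-- The inclusion `j : Ω_pX → ΛX`. -/
noncomputable abbrev loopInclusion (X : Type) [TopologicalSpace X] (p : X) :
    C(BasedLoopSpace X p, FreeLoopSpace X) :=
  ⟨Subtype.val, continuous_subtype_val⟩

/-- The evaluation map `e : ΛX → X`, `e(γ) = γ(0)`. -/
noncomputable abbrev loopEval (X : Type) [TopologicalSpace X] : C(FreeLoopSpace X, X) :=
  ⟨fun γ => γ 0, continuous_eval_const 0⟩

/-- The constant-loop map `c : X → ΛX`, `c(q) = c_q`. -/
noncomputable abbrev constLoopMap (X : Type) [TopologicalSpace X] : C(X, FreeLoopSpace X) :=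
  ContinuousMap.const'

open unitInterval Function Set

attribute [local instance] Path.Homotopic.setoid

section FGAux
variable {X Y : Type} [TopologicalSpace X] [TopologicalSpace Y]

lemma aut_eq_iff {x : X} (g h : FundamentalGroup X x) : g = h ↔
    (g : Path.Homotopic.Quotient x x) = (h : Path.Homotopic.Quotient x x) :=
  Iff.rfl

lemma exists_rep' {x : X} (g : FundamentalGroup X x) : ∃ γ : Path x x,
    (g : Path.Homotopic.Quotient x x) = ⟦γ⟧ := by
  obtain ⟨γ, h⟩ := Quotient.exists_rep (g : Path.Homotopic.Quotient x x)
  exact ⟨γ, h.symm⟩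

lemma induced_hom (f : C(X, Y)) (x : X) (g : FundamentalGroup X x) (γ : Path x x)
    (h : (g : Path.Homotopic.Quotient x x) = ⟦γ⟧) :
    (inducedFundamentalGroupHom f x g : Path.Homotopic.Quotient (f x) (f x)) =
      ⟦γ.map f.continuous⟧ := by
  show (FundamentalGroupoid.fundamentalGroupoidFunctor.map
      (X := TopCat.of X) (Y := TopCat.of Y) (TopCat.ofHom f)).map
        (g : Path.Homotopic.Quotient x x) = _
  rw [h]
  rfl

noncomputable def ofLoop (x : X) (γ : Path x x) : FundamentalGroup X x :=
  (⟦γ⟧ : Path.Homotopic.Quotient x x)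

lemma ofLoop_hom (x : X) (γ : Path x x) : (ofLoop x γ : Path.Homotopic.Quotient x x) = ⟦γ⟧ := rfl

end FGAux



/-- quotient map I → S¹ -/
noncomputable def mkI : C(unitInterval, AddCircle (1:ℝ)) :=
  ⟨fun u => ((u:ℝ) : AddCircle (1:ℝ)), (AddCircle.continuous_mk' 1).comp continuous_subtype_val⟩

lemma mkI_surj : Surjective mkI := by
  intro z
  have h := (AddCircle.equivIco 1 0).symm_apply_apply z
  have h2 := ((AddCircle.equivIco 1 0) z).2
  simp only [zero_add] at h2
  exact ⟨⟨((AddCircle.equivIco 1 0) z : ℝ), h2.1, h2.2.le⟩, h⟩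

lemma mkI_zero : mkI 0 = 0 := rfl

lemma mkI_one : mkI 1 = 0 := by
  show ((1:ℝ) : AddCircle (1:ℝ)) = 0
  exact AddCircle.coe_period (1:ℝ)

lemma mkI_fiber {u v : unitInterval} (h : mkI u = mkI v) {Y : Type} (f : unitInterval → Y)
    (hf : f 0 = f 1) : f u = f v := by
  have h' : ((u:ℝ) : AddCircle (1:ℝ)) = ((v:ℝ)) := h
  rw [QuotientAddGroup.eq_iff_sub_mem, AddSubgroup.mem_zmultiples_iff] at h'
  obtain ⟨n, hn⟩ := h'
  have hn' : (n : ℝ) = (u:ℝ) - (v:ℝ) := by simpa using hn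
  have hu := u.2; have hv := v.2
  simp only [mem_Icc] at hu hv
  have hb1 : (-1 : ℤ) ≤ n := by exact_mod_cast (by push_cast; linarith : ((-1:ℤ):ℝ) ≤ (n:ℝ))
  have hb2 : n ≤ 1 := by exact_mod_cast (by push_cast; linarith : ((n:ℤ):ℝ) ≤ ((1:ℤ):ℝ))
  interval_cases n
  · have hu1 : u = 0 := Subtype.ext (by push_cast at hn' ⊢; linarith)
    have hv1 : v = 1 := Subtype.ext (by push_cast at hn' ⊢; linarith)
    rw [hu1, hv1, hf]
  · rw [show u = v from Subtype.ext (by push_cast at hn'; linarith)]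
  · have hu1 : u = 1 := Subtype.ext (by push_cast at hn' ⊢; linarith)
    have hv1 : v = 0 := Subtype.ext (by push_cast at hn' ⊢; linarith)
    rw [hu1, hv1, hf]

noncomputable def loopSec : AddCircle (1:ℝ) → unitInterval := surjInv mkI_surj

lemma mkI_loopSec (z : AddCircle (1:ℝ)) : mkI (loopSec z) = z := surjInv_eq mkI_surj z

section Loopify

variable {A X : Type} [TopologicalSpace A] [CompactSpace A] [T2Space A] [TopologicalSpace X]

/-- Turn a family of "interval loops" into a family of circle loops. -/
noncomputable def loopify (g : C(A × unitInterval, X)) (hg : ∀ a, g (a, 0) = g (a, 1)) :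
    C(A × AddCircle (1:ℝ), X) where
  toFun az := g (az.1, loopSec az.2)
  continuous_toFun := by
    have hcq : Continuous (Prod.map (id : A → A) mkI) :=
      continuous_id.prodMap mkI.continuous
    have hq : Topology.IsQuotientMap (Prod.map (id : A → A) mkI) :=
      (hcq.isClosedMap).isQuotientMap hcq (surjective_id.prodMap mkI_surj)
    rw [hq.continuous_iff]
    have : (fun az : A × AddCircle (1:ℝ) => g (az.1, loopSec az.2)) ∘
        Prod.map (id : A → A) mkI = ⇑g := by
      funext au
      exact mkI_fiber (mkI_loopSec (mkI au.2)) (fun u => g (au.1, u)) (hg au.1)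
    rw [this]
    exact g.continuous

lemma loopify_spec (g : C(A × unitInterval, X)) (hg : ∀ a, g (a, 0) = g (a, 1)) (a : A)
    (u : unitInterval) : loopify g hg (a, mkI u) = g (a, u) :=
  mkI_fiber (mkI_loopSec (mkI u)) (fun u => g (a, u)) (hg a)

/-- curried version, giving a family of free loops -/
noncomputable def loopifyC (g : C(A × unitInterval, X)) (hg : ∀ a, g (a, 0) = g (a, 1)) :
    C(A, C(AddCircle (1:ℝ), X)) := (loopify g hg).curry

lemma loopifyC_spec (g : C(A × unitInterval, X)) (hg : ∀ a, g (a, 0) = g (a, 1)) (a : A)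
    (u : unitInterval) : loopifyC g hg a (mkI u) = g (a, u) :=
  loopify_spec g hg a u

lemma loop_ext {X : Type} [TopologicalSpace X] {γ γ' : C(AddCircle (1:ℝ), X)}
    (h : ∀ u : unitInterval, γ (mkI u) = γ' (mkI u)) : γ = γ' :=
  ContinuousMap.ext fun z => by rcases mkI_surj z with ⟨u, rfl⟩; exact h u

end Loopify



attribute [local instance] Path.Homotopic.setoid

instance : ContractibleSpace (unitInterval × unitInterval) := by
  have h1 : Convex ℝ ((Icc (0:ℝ) 1) ×ˢ (Icc (0:ℝ) 1)) := (convex_Icc 0 1).prod (convex_Icc 0 1)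
  have h2 : ContractibleSpace ↥((Icc (0:ℝ) 1) ×ˢ (Icc (0:ℝ) 1)) :=
    h1.contractibleSpace ⟨(0,0), by simp⟩
  exact (Homeomorph.Set.prod (Icc (0:ℝ) 1) (Icc (0:ℝ) 1)).contractibleSpace_iff.mp h2

section Square
variable {Y : Type} [TopologicalSpace Y]

lemma homotopic_of_coe_eq {a b a' b' : Y} {P₁ P₂ : Path a b} {R₁ R₂ : Path a' b'}
    (h₁ : ⇑P₁ = ⇑R₁) (h₂ : ⇑P₂ = ⇑R₂) (h : P₁.Homotopic P₂) : R₁.Homotopic R₂ := by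
  obtain ⟨H⟩ := h
  refine ⟨⟨⟨H.toContinuousMap, ?_, ?_⟩, ?_⟩⟩
  · intro t
    show H (0, t) = R₁ t
    rw [H.apply_zero]
    exact congrFun h₁ t
  · intro t
    show H (1, t) = R₂ t
    rw [H.apply_one]
    exact congrFun h₂ t
  · intro t x hx
    show H (t, x) = R₁ x
    rw [H.eq_fst t hx]
    exact congrFun h₁ x

/-- Square commutation: top-then-right is homotopic to left-then-bottom. -/
lemma square_comm (Q : C(unitInterval × unitInterval, Y)) {y₀ y₁ y₂ y₃ : Y}
    (T : Path y₀ y₁) (hT : ∀ t, T t = Q (0, t))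
    (Bo : Path y₂ y₃) (hB : ∀ t, Bo t = Q (1, t))
    (L : Path y₀ y₂) (hL : ∀ s, L s = Q (s, 0))
    (R : Path y₁ y₃) (hR : ∀ s, R s = Q (s, 1)) :
    (T.trans R).Homotopic (L.trans Bo) := by
  let eT : Path ((0,0) : unitInterval × unitInterval) ((0,1) : unitInterval × unitInterval) :=
    ⟨⟨fun t => (0, t), by fun_prop⟩, rfl, rfl⟩
  let eR : Path ((0,1) : unitInterval × unitInterval) ((1,1) : unitInterval × unitInterval) :=
    ⟨⟨fun s => (s, 1), by fun_prop⟩, rfl, rfl⟩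
  let eL : Path ((0,0) : unitInterval × unitInterval) ((1,0) : unitInterval × unitInterval) :=
    ⟨⟨fun s => (s, 0), by fun_prop⟩, rfl, rfl⟩
  let eB : Path ((1,0) : unitInterval × unitInterval) ((1,1) : unitInterval × unitInterval) :=
    ⟨⟨fun t => (1, t), by fun_prop⟩, rfl, rfl⟩
  have h := SimplyConnectedSpace.paths_homotopic (eT.trans eR) (eL.trans eB)
  have h2 := h.map Q
  rw [Path.map_trans, Path.map_trans] at h2
  refine homotopic_of_coe_eq ?_ ?_ h2
  · funext u
    rw [Path.trans_apply, Path.trans_apply]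
    split_ifs
    · exact (hT _).symm
    · exact (hR _).symm
  · funext u
    rw [Path.trans_apply, Path.trans_apply]
    split_ifs
    · exact (hL _).symm
    · exact (hB _).symm

end Square



namespace FLS

/-- clamped reparametrisation `u ↦ min 1 (max 0 (4u - 2))`. -/
noncomputable def φc (u : unitInterval) : unitInterval :=
  ⟨min 1 (max 0 (4*(u:ℝ)-2)), le_min zero_le_one (le_max_left 0 _), min_le_left 1 _⟩

lemma continuous_φc : Continuous φc := by
  apply Continuous.subtype_mk
  fun_prop

lemma φc_of_le {u : unitInterval} (h : (u:ℝ) ≤ 1/2) : φc u = 0 :=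
  Subtype.ext (by simp only [φc]; rw [max_eq_left (by linarith), min_eq_right zero_le_one]; rfl)

lemma φc_of_ge {u : unitInterval} (h : (3:ℝ)/4 ≤ (u:ℝ)) : φc u = 1 :=
  Subtype.ext (by simp only [φc]; rw [min_eq_left (le_max_of_le_right (by linarith))]; rfl)

lemma φc_coe (u : unitInterval) : (φc u : ℝ) = min 1 (max 0 (4*(u:ℝ)-2)) := rfl

/-- linear interpolation between `φc` and the identity. -/
noncomputable def lin (v u : unitInterval) : unitInterval :=
  ⟨(1-(v:ℝ))*(φc u : ℝ) + (v:ℝ)*(u:ℝ), by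
    have h1 := (φc u).2.1; have h2 := (φc u).2.2
    have h3 := u.2.1; have h4 := u.2.2
    have h5 := v.2.1; have h6 := v.2.2
    constructor
    · nlinarith
    · nlinarith⟩

lemma continuous_lin : Continuous (fun z : unitInterval × unitInterval => lin z.1 z.2) := by
  apply Continuous.subtype_mk
  have := continuous_φc
  fun_prop

lemma lin_zero (v : unitInterval) : lin v 0 = 0 := by
  apply Subtype.ext
  simp [lin, φc_of_le (by norm_num : ((0:unitInterval):ℝ) ≤ 1/2)]

lemma lin_one (v : unitInterval) : lin v 1 = 1 := by
  apply Subtype.ext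
  simp only [lin]
  rw [φc_of_ge (by norm_num : (3:ℝ)/4 ≤ ((1:unitInterval):ℝ))]
  push_cast
  ring

lemma lin_one_left (u : unitInterval) : lin 1 u = u := by
  apply Subtype.ext; simp [lin]

lemma lin_zero_left (u : unitInterval) : lin 0 u = φc u := by
  apply Subtype.ext; simp [lin]

/-- `t + u*(1-t)`: transport along second coordinate. -/
noncomputable def η (t u : unitInterval) : unitInterval :=
  ⟨(t:ℝ) + (u:ℝ)*(1-(t:ℝ)), by
    have h3 := u.2.1; have h4 := u.2.2
    have h5 := t.2.1; have h6 := t.2.2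
    constructor
    · nlinarith
    · nlinarith⟩

lemma continuous_η : Continuous (fun z : unitInterval × unitInterval => η z.1 z.2) := by
  apply Continuous.subtype_mk; fun_prop

lemma η_zero (t : unitInterval) : η t 0 = t := by apply Subtype.ext; simp [η]
lemma η_one (t : unitInterval) : η t 1 = 1 := by apply Subtype.ext; simp [η]
lemma η_zero_left (u : unitInterval) : η 0 u = u := by apply Subtype.ext; simp [η]
lemma η_one_left (u : unitInterval) : η 1 u = 1 := by apply Subtype.ext; simp [η]

/-- multiplication on the unit interval -/
noncomputable def mulI (s u : unitInterval) : unitInterval :=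
  ⟨(s:ℝ)*(u:ℝ), by
    have h3 := u.2.1; have h4 := u.2.2
    have h5 := s.2.1; have h6 := s.2.2
    exact ⟨by nlinarith, by nlinarith⟩⟩

lemma continuous_mulI : Continuous (fun z : unitInterval × unitInterval => mulI z.1 z.2) := by
  apply Continuous.subtype_mk; fun_prop

lemma mulI_zero (s : unitInterval) : mulI s 0 = 0 := by apply Subtype.ext; simp [mulI]
lemma mulI_one (s : unitInterval) : mulI s 1 = s := by apply Subtype.ext; simp [mulI]
lemma mulI_zero_left (u : unitInterval) : mulI 0 u = 0 := by apply Subtype.ext; simp [mulI]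

section Conj
variable {X : Type} [TopologicalSpace X]

/-- conjugation of a loop `m` at `a` by a path `w : a ⟶ b`, giving a loop at `b`. -/
noncomputable def conjPath {a b : X} (w : Path a b) (m : Path a a) : Path b b :=
  w.symm.trans (m.trans w)

lemma conjPath_const {a b : X} {c : X} (w : Path a b) (m : Path a a)
    (hw : ∀ u, w u = c) (hm : ∀ u, m u = c) (u : unitInterval) : conjPath w m u = c := by
  unfold conjPath
  rw [Path.trans_apply]
  split_ifs with h
  · rw [Path.symm_apply]; exact hw _
  · rw [Path.trans_apply]
    split_ifs with h2
    · exact hm _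
    · exact hw _

lemma conjPath_reparam {a b : X} {c : X} (w : Path a b) (m : Path a a)
    (hw : ∀ u, w u = c) (u : unitInterval) : conjPath w m u = m (φc u) := by
  have ha : a = c := by rw [← w.source]; exact hw 0
  unfold conjPath
  rw [Path.trans_apply]
  split_ifs with h
  · rw [Path.symm_apply, φc_of_le (by simpa using h), m.source]
    exact (hw _).trans ha.symm
  · rw [Path.trans_apply]
    split_ifs with h2
    · congr 1
      apply Subtype.ext
      rw [φc_coe]
      simp only at h h2 ⊢
      rw [max_eq_right (by push_cast; linarith), min_eq_right (by push_cast; linarith)]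
      push_cast
      ring
    · rw [φc_of_ge (by push_cast at h2 ⊢; linarith), m.target]
      exact (hw _).trans ha.symm

lemma conjPath_congr_mid {a b : X} (w : Path a b) (m m' : Path a a) (hm : ∀ u, m u = m' u)
    (u : unitInterval) : conjPath w m u = conjPath w m' u := by
  rw [show m = m' from Path.ext (funext hm)]

end Conj
end FLS

section Hard
variable {X : Type} [TopologicalSpace X] (p : X)

lemma hard_ker (γ : Path (constLoop p) (constLoop p))
    (h : (γ.map (loopEval X).continuous).Homotopic (Path.refl p)) :
    ∃ β : Path (basedConstLoop p) (basedConstLoop p),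
      (β.map (loopInclusion X p).continuous).Homotopic γ := by
  obtain ⟨F⟩ := h
  -- basic facts about F
  have hFs0 : ∀ a : unitInterval, F (a, 0) = p := fun a => F.source a
  have hFs1 : ∀ a : unitInterval, F (a, 1) = p := fun a => F.target a
  have hF0 : ∀ t : unitInterval, F (0, t) = γ t 0 := fun t => F.apply_zero t
  have hF1 : ∀ t : unitInterval, F (1, t) = p := fun t => F.apply_one t
  -- the transport path family
  let Ap : ∀ s t : unitInterval, Path (F (0, t)) (F (s, t)) := fun s t =>
    ⟨⟨fun u => F (FLS.mulI s u, t), by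
        apply F.continuous.comp
        exact (FLS.continuous_mulI.comp (continuous_const.prodMk continuous_id)).prodMk
          continuous_const⟩,
      by show F (FLS.mulI s 0, t) = F (0, t); rw [FLS.mulI_zero],
      by show F (FLS.mulI s 1, t) = F (s, t); rw [FLS.mulI_one]⟩
  -- the loop family
  let M : ∀ t : unitInterval, Path (F (0, t)) (F (0, t)) := fun t =>
    ⟨⟨fun u => γ t (mkI u), (γ t).continuous.comp mkI.continuous⟩,
      by show γ t (mkI 0) = F (0, t); rw [mkI_zero]; exact (hF0 t).symm,
      by show γ t (mkI 1) = F (0, t); rw [mkI_one]; exact (hF0 t).symm⟩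
  let Cp : ∀ s t : unitInterval, Path (F (s, t)) (F (s, t)) := fun s t =>
    FLS.conjPath (Ap s t) (M t)
  have hApc : Continuous ↿(fun st : unitInterval × unitInterval => Ap st.1 st.2) := by
    show Continuous fun q : (unitInterval × unitInterval) × unitInterval =>
      F (FLS.mulI q.1.1 q.2, q.1.2)
    apply F.continuous.comp
    exact (FLS.continuous_mulI.comp ((continuous_fst.fst).prodMk continuous_snd)).prodMk
      continuous_fst.snd
  have hMc : Continuous ↿(fun st : unitInterval × unitInterval => M st.2) := by
    show Continuous fun q : (unitInterval × unitInterval) × unitInterval => (γ q.1.2) (mkI q.2)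
    exact ContinuousEval.continuous_eval.comp
      ((γ.continuous.comp continuous_fst.snd).prodMk (mkI.continuous.comp continuous_snd))
  have hCpc : Continuous ↿(fun st : unitInterval × unitInterval => Cp st.1 st.2) := by
    show Continuous ↿(fun st : unitInterval × unitInterval =>
      ((Ap st.1 st.2).symm.trans ((M st.2).trans (Ap st.1 st.2))))
    exact Path.trans_continuous_family _ (Path.symm_continuous_family _ hApc) _
      (Path.trans_continuous_family _ hMc _ hApc)
  let g1 : C((unitInterval × unitInterval) × unitInterval, X) :=
    ⟨fun q => Cp q.1.1 q.1.2 q.2, hCpc⟩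
  have hg1 : ∀ a, g1 (a, 0) = g1 (a, 1) := fun a =>
    ((Cp a.1 a.2).source).trans ((Cp a.1 a.2).target).symm
  let Q1 : C(unitInterval × unitInterval, FreeLoopSpace X) := loopifyC g1 hg1
  have hQ1spec : ∀ (a : unitInterval × unitInterval) (u : unitInterval),
      Q1 a (mkI u) = Cp a.1 a.2 u := fun a u => loopifyC_spec g1 hg1 a u
  -- bottom edge (t = 0) is constant
  have hQ1b : ∀ s, Q1 (s, 0) = constLoop p := by
    intro s
    apply loop_ext
    intro u
    rw [hQ1spec]
    exact FLS.conjPath_const (Ap s 0) (M 0)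
      (fun u' => hFs0 _) (fun u' => by show γ 0 (mkI u') = p; rw [γ.source]; rfl) u
  -- top edge (t = 1) is constant
  have hQ1t : ∀ s, Q1 (s, 1) = constLoop p := by
    intro s
    apply loop_ext
    intro u
    rw [hQ1spec]
    exact FLS.conjPath_const (Ap s 1) (M 1)
      (fun u' => hFs1 _) (fun u' => by show γ 1 (mkI u') = p; rw [γ.target]; rfl) u
  -- the edge at s = 1 consists of based loops
  have hQ1based : ∀ t, Q1 (1, t) 0 = p := by
    intro t
    rw [← mkI_zero, hQ1spec]
    show Cp 1 t 0 = p
    rw [(Cp 1 t).source]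
    exact hF1 t
  let β : Path (basedConstLoop p) (basedConstLoop p) :=
    ⟨⟨fun t => ⟨Q1 (1, t), hQ1based t⟩,
        (Q1.continuous.comp (continuous_const.prodMk continuous_id)).subtype_mk _⟩,
      Subtype.ext (hQ1b 1), Subtype.ext (hQ1t 1)⟩
  let TOP : Path (constLoop p) (constLoop p) :=
    ⟨⟨fun t => Q1 (0, t), Q1.continuous.comp (continuous_const.prodMk continuous_id)⟩,
      hQ1b 0, hQ1t 0⟩
  have sq1 := square_comm Q1 TOP (fun t => rfl)
    (β.map (loopInclusion X p).continuous) (fun t => rfl)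
    (Path.refl (constLoop p)) (fun s => (hQ1b s).symm)
    (Path.refl (constLoop p)) (fun s => (hQ1t s).symm)
  -- second square: reparametrisation
  let g2 : C((unitInterval × unitInterval) × unitInterval, X) :=
    ⟨fun q => γ q.1.2 (mkI (FLS.lin q.1.1 q.2)), by
      exact ContinuousEval.continuous_eval.comp
        ((γ.continuous.comp continuous_fst.snd).prodMk (mkI.continuous.comp
          (FLS.continuous_lin.comp ((continuous_fst.fst).prodMk continuous_snd))))⟩
  have hg2 : ∀ a, g2 (a, 0) = g2 (a, 1) := by
    intro a
    show γ a.2 (mkI (FLS.lin a.1 0)) = γ a.2 (mkI (FLS.lin a.1 1))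
    rw [FLS.lin_zero, FLS.lin_one, mkI_zero, mkI_one]
  let Q2 : C(unitInterval × unitInterval, FreeLoopSpace X) := loopifyC g2 hg2
  have hQ2spec : ∀ (a : unitInterval × unitInterval) (u : unitInterval),
      Q2 a (mkI u) = γ a.2 (mkI (FLS.lin a.1 u)) := fun a u => loopifyC_spec g2 hg2 a u
  have hQ2L : ∀ v, Q2 (v, 0) = constLoop p := by
    intro v
    apply loop_ext
    intro u
    rw [hQ2spec]
    show γ 0 _ = _
    rw [γ.source]
    rfl
  have hQ2R : ∀ v, Q2 (v, 1) = constLoop p := by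
    intro v
    apply loop_ext
    intro u
    rw [hQ2spec]
    show γ 1 _ = _
    rw [γ.target]
    rfl
  have hQ2top : ∀ t, Q2 (0, t) = Q1 (0, t) := by
    intro t
    apply loop_ext
    intro u
    rw [hQ2spec, hQ1spec]
    show γ t (mkI (FLS.lin 0 u)) = Cp 0 t u
    rw [FLS.conjPath_reparam (Ap 0 t) (M t)
      (fun u' => by show F (FLS.mulI 0 u', t) = F (0, t); rw [FLS.mulI_zero_left]) u]
    show _ = γ t (mkI (FLS.φc u))
    rw [FLS.lin_zero_left]
  have hQ2bot : ∀ t, Q2 (1, t) = γ t := by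
    intro t
    apply loop_ext
    intro u
    rw [hQ2spec, FLS.lin_one_left]
  have sq2 := square_comm Q2 TOP (fun t => (hQ2top t).symm)
    γ (fun t => (hQ2bot t).symm)
    (Path.refl (constLoop p)) (fun v => (hQ2L v).symm)
    (Path.refl (constLoop p)) (fun v => (hQ2R v).symm)
  -- chain the homotopies
  refine ⟨β, ?_⟩
  have h1 : (β.map (loopInclusion X p).continuous).Homotopic
      ((Path.refl (constLoop p)).trans (β.map (loopInclusion X p).continuous)) :=
    ⟨(Path.Homotopy.reflTrans _).symm⟩
  have h2 : ((Path.refl (constLoop p)).trans γ).Homotopic γ := ⟨Path.Homotopy.reflTrans γ⟩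
  exact ((h1.trans sq1.symm).trans sq2).trans h2

lemma hard_inj (β : Path (basedConstLoop p) (basedConstLoop p))
    (h : (β.map (loopInclusion X p).continuous).Homotopic (Path.refl (constLoop p))) :
    β.Homotopic (Path.refl (basedConstLoop p)) := by
  obtain ⟨F⟩ := h
  have hF0' : ∀ t : unitInterval, F (0, t) = (β t).val := fun t => F.apply_zero t
  have hF1' : ∀ t : unitInterval, F (1, t) = constLoop p := fun t => F.apply_one t
  have hFs0' : ∀ s : unitInterval, F (s, 0) = constLoop p := fun s => F.source s
  have hFs1' : ∀ s : unitInterval, F (s, 1) = constLoop p := fun s => F.target s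
  have hG0 : ∀ t : unitInterval, F (0, t) 0 = p := fun t => by rw [hF0']; exact (β t).2
  have hG1 : ∀ t : unitInterval, F (1, t) 0 = p := fun t => by rw [hF1']; rfl
  have hGs0 : ∀ s : unitInterval, F (s, 0) 0 = p := fun s => by rw [hFs0']; rfl
  have hGs1 : ∀ s : unitInterval, F (s, 1) 0 = p := fun s => by rw [hFs1']; rfl
  -- vertical transport paths
  let w : ∀ s t : unitInterval, Path (F (s, t) 0) p := fun s t =>
    ⟨⟨fun u => F (s, FLS.η t u) 0, by
        apply (continuous_eval_const (0 : FreeLoopCircle)).comp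
        apply F.continuous.comp
        exact continuous_const.prodMk (FLS.continuous_η.comp
          (continuous_const.prodMk continuous_id))⟩,
      by show F (s, FLS.η t 0) 0 = F (s, t) 0; rw [FLS.η_zero],
      by show F (s, FLS.η t 1) 0 = p; rw [FLS.η_one]; exact hGs1 s⟩
  -- the loops themselves, as interval paths
  let mid : ∀ s t : unitInterval, Path (F (s, t) 0) (F (s, t) 0) := fun s t =>
    ⟨⟨fun u => F (s, t) (mkI u), (F (s, t)).continuous.comp mkI.continuous⟩,
      by show F (s, t) (mkI 0) = F (s, t) 0; rw [mkI_zero],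
      by show F (s, t) (mkI 1) = F (s, t) 0; rw [mkI_one]⟩
  let D : ∀ s t : unitInterval, Path p p := fun s t => FLS.conjPath (w s t) (mid s t)
  have hwc : Continuous ↿(fun st : unitInterval × unitInterval => w st.1 st.2) := by
    show Continuous fun q : (unitInterval × unitInterval) × unitInterval =>
      F (q.1.1, FLS.η q.1.2 q.2) 0
    apply (continuous_eval_const (0 : FreeLoopCircle)).comp
    apply F.continuous.comp
    exact (continuous_fst.fst).prodMk (FLS.continuous_η.comp
      ((continuous_fst.snd).prodMk continuous_snd))
  have hmidc : Continuous ↿(fun st : unitInterval × unitInterval => mid st.1 st.2) := by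
    show Continuous fun q : (unitInterval × unitInterval) × unitInterval => F q.1 (mkI q.2)
    exact ContinuousEval.continuous_eval.comp
      ((F.continuous.comp continuous_fst).prodMk (mkI.continuous.comp continuous_snd))
  have hDc : Continuous ↿(fun st : unitInterval × unitInterval => D st.1 st.2) := by
    show Continuous ↿(fun st : unitInterval × unitInterval =>
      ((w st.1 st.2).symm.trans ((mid st.1 st.2).trans (w st.1 st.2))))
    exact Path.trans_continuous_family _ (Path.symm_continuous_family _ hwc) _
      (Path.trans_continuous_family _ hmidc _ hwc)
  let g3 : C((unitInterval × unitInterval) × unitInterval, X) :=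
    ⟨fun q => D q.1.1 q.1.2 q.2, hDc⟩
  have hg3 : ∀ a, g3 (a, 0) = g3 (a, 1) := fun a =>
    ((D a.1 a.2).source).trans ((D a.1 a.2).target).symm
  let Q3L : C(unitInterval × unitInterval, FreeLoopSpace X) := loopifyC g3 hg3
  have hQ3spec : ∀ (a : unitInterval × unitInterval) (u : unitInterval),
      Q3L a (mkI u) = D a.1 a.2 u := fun a u => loopifyC_spec g3 hg3 a u
  have hQ3based : ∀ a, Q3L a 0 = p := fun a => by
    rw [← mkI_zero, hQ3spec]; exact (D a.1 a.2).source
  let Q3 : C(unitInterval × unitInterval, BasedLoopSpace X p) :=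
    ⟨fun a => ⟨Q3L a, hQ3based a⟩, Q3L.continuous.subtype_mk _⟩
  -- edge values of Q3
  have hQ3_1t : ∀ t, Q3 (1, t) = basedConstLoop p := by
    intro t
    apply Subtype.ext
    apply loop_ext
    intro u
    show Q3L (1, t) (mkI u) = constLoop p (mkI u)
    rw [hQ3spec]
    exact FLS.conjPath_const (w 1 t) (mid 1 t) (fun u' => hG1 _)
      (fun u' => by show F (1, t) (mkI u') = p; rw [hF1']; rfl) u
  have hQ3_s1 : ∀ s, Q3 (s, 1) = basedConstLoop p := by
    intro s
    apply Subtype.ext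
    apply loop_ext
    intro u
    show Q3L (s, 1) (mkI u) = constLoop p (mkI u)
    rw [hQ3spec]
    refine FLS.conjPath_const (w s 1) (mid s 1) (fun u' => ?_)
      (fun u' => by show F (s, 1) (mkI u') = p; rw [hFs1']; rfl) u
    show F (s, FLS.η 1 u') 0 = p
    rw [FLS.η_one_left]
    exact hGs1 s
  have hQ3_00 : Q3 (0, 0) = basedConstLoop p := by
    apply Subtype.ext
    apply loop_ext
    intro u
    show Q3L (0, 0) (mkI u) = constLoop p (mkI u)
    rw [hQ3spec]
    exact FLS.conjPath_const (w 0 0) (mid 0 0) (fun u' => hG0 _)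
      (fun u' => by show F (0, 0) (mkI u') = p; rw [hFs0']; rfl) u
  let TOP3 : Path (basedConstLoop p) (basedConstLoop p) :=
    ⟨⟨fun t => Q3 (0, t), Q3.continuous.comp (continuous_const.prodMk continuous_id)⟩,
      hQ3_00, hQ3_s1 0⟩
  let σL : Path (basedConstLoop p) (basedConstLoop p) :=
    ⟨⟨fun s => Q3 (s, 0), Q3.continuous.comp (continuous_id.prodMk continuous_const)⟩,
      hQ3_00, hQ3_1t 0⟩
  have sq3 := square_comm Q3 TOP3 (fun t => rfl)
    (Path.refl (basedConstLoop p)) (fun t => (hQ3_1t t).symm)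
    σL (fun s => rfl)
    (Path.refl (basedConstLoop p)) (fun s => (hQ3_s1 s).symm)
  -- reparametrisation square
  let g4 : C((unitInterval × unitInterval) × unitInterval, X) :=
    ⟨fun q => (β q.1.2).val (mkI (FLS.lin q.1.1 q.2)), by
      have hβv : Continuous fun t : unitInterval => ((β t) : FreeLoopSpace X) :=
        continuous_subtype_val.comp β.continuous
      exact ContinuousEval.continuous_eval.comp
        ((hβv.comp continuous_fst.snd).prodMk (mkI.continuous.comp
          (FLS.continuous_lin.comp ((continuous_fst.fst).prodMk continuous_snd))))⟩
  have hg4 : ∀ a, g4 (a, 0) = g4 (a, 1) := by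
    intro a
    show (β a.2).val (mkI (FLS.lin a.1 0)) = (β a.2).val (mkI (FLS.lin a.1 1))
    rw [FLS.lin_zero, FLS.lin_one, mkI_zero, mkI_one]
  let Q4L : C(unitInterval × unitInterval, FreeLoopSpace X) := loopifyC g4 hg4
  have hQ4spec : ∀ (a : unitInterval × unitInterval) (u : unitInterval),
      Q4L a (mkI u) = (β a.2).val (mkI (FLS.lin a.1 u)) := fun a u => loopifyC_spec g4 hg4 a u
  have hQ4based : ∀ a, Q4L a 0 = p := fun a => by
    rw [← mkI_zero, hQ4spec, FLS.lin_zero, mkI_zero]; exact (β a.2).2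
  let Q4 : C(unitInterval × unitInterval, BasedLoopSpace X p) :=
    ⟨fun a => ⟨Q4L a, hQ4based a⟩, Q4L.continuous.subtype_mk _⟩
  have hQ4top : ∀ t, Q4 (0, t) = Q3 (0, t) := by
    intro t
    apply Subtype.ext
    apply loop_ext
    intro u
    show Q4L (0, t) (mkI u) = Q3L (0, t) (mkI u)
    rw [hQ4spec, hQ3spec]
    rw [FLS.conjPath_reparam (w 0 t) (mid 0 t) (fun u' => hG0 _) u]
    show (β t).val (mkI (FLS.lin 0 u)) = F (0, t) (mkI (FLS.φc u))
    rw [hF0', FLS.lin_zero_left]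
  have hQ4bot : ∀ t, Q4 (1, t) = β t := by
    intro t
    apply Subtype.ext
    apply loop_ext
    intro u
    show Q4L (1, t) (mkI u) = (β t).val (mkI u)
    rw [hQ4spec, FLS.lin_one_left]
  have hQ4L : ∀ v, Q4 (v, 0) = basedConstLoop p := by
    intro v
    apply Subtype.ext
    apply loop_ext
    intro u
    show Q4L (v, 0) (mkI u) = constLoop p (mkI u)
    rw [hQ4spec, β.source]
    rfl
  have hQ4R : ∀ v, Q4 (v, 1) = basedConstLoop p := by
    intro v
    apply Subtype.ext
    apply loop_ext
    intro u
    show Q4L (v, 1) (mkI u) = constLoop p (mkI u)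
    rw [hQ4spec, β.target]
    rfl
  have sq4 := square_comm Q4 TOP3 (fun t => (hQ4top t).symm)
    β (fun t => (hQ4bot t).symm)
    (Path.refl (basedConstLoop p)) (fun v => (hQ4L v).symm)
    (Path.refl (basedConstLoop p)) (fun v => (hQ4R v).symm)
  -- nullhomotopy square for the left edge
  let E : ∀ v s : unitInterval, Path p p := fun v s =>
    FLS.conjPath (w s v) (Path.refl (F (s, v) 0))
  have hwc' : Continuous ↿(fun vs : unitInterval × unitInterval => w vs.2 vs.1) := by
    show Continuous fun q : (unitInterval × unitInterval) × unitInterval =>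
      F (q.1.2, FLS.η q.1.1 q.2) 0
    apply (continuous_eval_const (0 : FreeLoopCircle)).comp
    apply F.continuous.comp
    exact (continuous_fst.snd).prodMk (FLS.continuous_η.comp
      ((continuous_fst.fst).prodMk continuous_snd))
  have hreflc : Continuous ↿(fun vs : unitInterval × unitInterval =>
      Path.refl (F (vs.2, vs.1) 0)) := by
    show Continuous fun q : (unitInterval × unitInterval) × unitInterval => F (q.1.2, q.1.1) 0
    apply (continuous_eval_const (0 : FreeLoopCircle)).comp
    exact F.continuous.comp ((continuous_fst.snd).prodMk continuous_fst.fst)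
  have hEc : Continuous ↿(fun vs : unitInterval × unitInterval => E vs.1 vs.2) := by
    show Continuous ↿(fun vs : unitInterval × unitInterval =>
      ((w vs.2 vs.1).symm.trans ((Path.refl (F (vs.2, vs.1) 0)).trans (w vs.2 vs.1))))
    exact Path.trans_continuous_family _ (Path.symm_continuous_family _ hwc') _
      (Path.trans_continuous_family _ hreflc _ hwc')
  let g5 : C((unitInterval × unitInterval) × unitInterval, X) :=
    ⟨fun q => E q.1.1 q.1.2 q.2, hEc⟩
  have hg5 : ∀ a, g5 (a, 0) = g5 (a, 1) := fun a =>
    ((E a.1 a.2).source).trans ((E a.1 a.2).target).symm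
  let Q5L : C(unitInterval × unitInterval, FreeLoopSpace X) := loopifyC g5 hg5
  have hQ5spec : ∀ (a : unitInterval × unitInterval) (u : unitInterval),
      Q5L a (mkI u) = E a.1 a.2 u := fun a u => loopifyC_spec g5 hg5 a u
  have hQ5based : ∀ a, Q5L a 0 = p := fun a => by
    rw [← mkI_zero, hQ5spec]; exact (E a.1 a.2).source
  let Q5 : C(unitInterval × unitInterval, BasedLoopSpace X p) :=
    ⟨fun a => ⟨Q5L a, hQ5based a⟩, Q5L.continuous.subtype_mk _⟩
  have hQ5top : ∀ s, Q5 (0, s) = Q3 (s, 0) := by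
    intro s
    apply Subtype.ext
    apply loop_ext
    intro u
    show Q5L (0, s) (mkI u) = Q3L (s, 0) (mkI u)
    rw [hQ5spec, hQ3spec]
    refine FLS.conjPath_congr_mid (w s 0) (Path.refl (F (s, 0) 0)) (mid s 0) (fun u' => ?_) u
    show F (s, 0) 0 = F (s, 0) (mkI u')
    rw [hFs0']
    rfl
  have hQ5_1s : ∀ s, Q5 (1, s) = basedConstLoop p := by
    intro s
    apply Subtype.ext
    apply loop_ext
    intro u
    show Q5L (1, s) (mkI u) = constLoop p (mkI u)
    rw [hQ5spec]
    refine FLS.conjPath_const (w s 1) (Path.refl (F (s, 1) 0)) (fun u' => ?_)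
      (fun u' => hGs1 s) u
    show F (s, FLS.η 1 u') 0 = p
    rw [FLS.η_one_left]
    exact hGs1 s
  have hQ5L : ∀ v, Q5 (v, 0) = basedConstLoop p := by
    intro v
    apply Subtype.ext
    apply loop_ext
    intro u
    show Q5L (v, 0) (mkI u) = constLoop p (mkI u)
    rw [hQ5spec]
    exact FLS.conjPath_const (w 0 v) (Path.refl (F (0, v) 0)) (fun u' => hG0 _)
      (fun u' => hG0 v) u
  have hQ5R : ∀ v, Q5 (v, 1) = basedConstLoop p := by
    intro v
    apply Subtype.ext
    apply loop_ext
    intro u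
    show Q5L (v, 1) (mkI u) = constLoop p (mkI u)
    rw [hQ5spec]
    exact FLS.conjPath_const (w 1 v) (Path.refl (F (1, v) 0)) (fun u' => hG1 _)
      (fun u' => hG1 v) u
  have sq5 := square_comm Q5 σL (fun s => (hQ5top s).symm)
    (Path.refl (basedConstLoop p)) (fun s => (hQ5_1s s).symm)
    (Path.refl (basedConstLoop p)) (fun v => (hQ5L v).symm)
    (Path.refl (basedConstLoop p)) (fun v => (hQ5R v).symm)
  -- chain everything
  have h1 : β.Homotopic ((Path.refl (basedConstLoop p)).trans β) := ⟨(Path.Homotopy.reflTrans β).symm⟩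
  have h2 : ((σL.trans (Path.refl (basedConstLoop p)))).Homotopic σL := ⟨Path.Homotopy.transRefl σL⟩
  have h3 : ((Path.refl (basedConstLoop p)).trans (Path.refl (basedConstLoop p))).Homotopic
      (Path.refl (basedConstLoop p)) := ⟨Path.Homotopy.reflTrans _⟩
  exact ((((h1.trans sq4.symm).trans sq3).trans h2).trans ((h2.symm.trans sq5).trans h3))

end Hard

/-- For a topological space `X` with basepoint `p`, the maps
`j : Ω_pX → ΛX` (inclusion), `e : ΛX → X` (evaluation at the basepoint of `S¹`) and
`c : X → ΛX` (constant loops) induce a split short exact sequence of fundamental groups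
`1 → π₁(Ω_pX, c_p) →j⋆ π₁(ΛX, c_p) →e⋆ π₁(X, p) → 1`:
`e⋆ ∘ c⋆ = id`, `j⋆` is injective, `e⋆` is surjective, and `ker e⋆ = im j⋆`. -/
theorem fundamentalGroup_freeLoopSpace_split_exact {X : Type} [TopologicalSpace X] (p : X) :
    (inducedFundamentalGroupHom (loopEval X) (constLoop p)).comp
        (inducedFundamentalGroupHom (constLoopMap X) p) =
      MonoidHom.id (FundamentalGroup X p) ∧
    Function.Injective (inducedFundamentalGroupHom (loopInclusion X p) (basedConstLoop p)) ∧
    Function.Surjective (inducedFundamentalGroupHom (loopEval X) (constLoop p)) ∧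
    (inducedFundamentalGroupHom (loopEval X) (constLoop p)).ker =
      (inducedFundamentalGroupHom (loopInclusion X p) (basedConstLoop p)).range := by
  have h1 : (inducedFundamentalGroupHom (loopEval X) (constLoop p)).comp
      (inducedFundamentalGroupHom (constLoopMap X) p) = MonoidHom.id (FundamentalGroup X p) := by
    ext g
    obtain ⟨γ, hγ⟩ := exists_rep' g
    rw [aut_eq_iff]
    have hmid := induced_hom (constLoopMap X) p g γ hγ
    have htop := induced_hom (loopEval X) (constLoop p)
      (inducedFundamentalGroupHom (constLoopMap X) p g)
      ((γ.map (constLoopMap X).continuous)) hmid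
    show (inducedFundamentalGroupHom (loopEval X) (constLoop p)
        (inducedFundamentalGroupHom (constLoopMap X) p g) : Path.Homotopic.Quotient p p) =
        (g : Path.Homotopic.Quotient p p)
    have hpath : (γ.map (constLoopMap X).continuous).map (loopEval X).continuous = γ :=
      Path.ext rfl
    rw [htop]
    exact (congrArg (fun q : Path p p => (⟦q⟧ : Path.Homotopic.Quotient p p)) hpath).trans hγ.symm
  refine ⟨h1, ?_, fun g => ⟨inducedFundamentalGroupHom (constLoopMap X) p g,
      DFunLike.congr_fun h1 g⟩, ?_⟩
  · rw [injective_iff_map_eq_one]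
    intro b hb
    obtain ⟨β, hβ⟩ := exists_rep' b
    have hb' : (⟦β.map (loopInclusion X p).continuous⟧ :
        Path.Homotopic.Quotient (constLoop p) (constLoop p)) = ⟦Path.refl (constLoop p)⟧ :=
      (induced_hom (loopInclusion X p) (basedConstLoop p) b β hβ).symm.trans
        ((aut_eq_iff _ _).mp hb)
    have h2 := hard_inj p β (Quotient.exact hb')
    rw [aut_eq_iff, hβ]
    exact Quotient.sound h2
  · ext g
    constructor
    · intro hg
      obtain ⟨γ, hγ⟩ := exists_rep' g
      rw [MonoidHom.mem_ker] at hg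
      have hg' : (⟦γ.map (loopEval X).continuous⟧ :
          Path.Homotopic.Quotient p p) = ⟦Path.refl p⟧ :=
        (induced_hom (loopEval X) (constLoop p) g γ hγ).symm.trans ((aut_eq_iff _ _).mp hg)
      obtain ⟨β, hβ⟩ := hard_ker p γ (Quotient.exact hg')
      refine ⟨ofLoop _ β, ?_⟩
      rw [aut_eq_iff, induced_hom (loopInclusion X p) (basedConstLoop p) _ β (ofLoop_hom _ β), hγ]
      exact Quotient.sound hβ
    · rintro ⟨b, rfl⟩
      obtain ⟨β, hβ⟩ := exists_rep' b
      rw [MonoidHom.mem_ker, aut_eq_iff]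
      rw [induced_hom (loopEval X) (constLoop p) _
        ((β.map (loopInclusion X p).continuous)) (induced_hom _ _ b β hβ)]
      show _ = 𝟙 (FundamentalGroupoid.mk p)
      rw [FundamentalGroupoid.id_eq_path_refl]
      congr 1
      exact Path.ext (funext fun t => (β t).2)
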